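/- Hankel–Sylvester identity for compound impulse responses: for any g : ℤ_{≥1} → ℝ and j ≥ 2, defining g_[j](t) := det(H_g(t,j)) with g_[0] ≡ 1, one has g_[j−2](t+2) · g_[j](t) = g_[j−1](t) · g_[j−1](t+2) − g_[j−1](t+1)², for all t ≥ 1. -/

import Mathlib

open Matrix

section Aux
variable {R : Type*} [CommRing R]

/-- Expansion of a determinant along a column with a single (possibly) nonzero entry. -/
lemma det_single_col {m : ℕ} (M : Matrix (Fin (m+1)) (Fin (m+1)) R) (j k : Fin (m+1)) (c : R)
    (h : ∀ i, M i j = if i = k then c else 0) :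
    M.det = (-1) ^ (k + j : ℕ) * c * (M.submatrix k.succAbove j.succAbove).det := by
  rw [Matrix.det_succ_column M j]
  rw [Fintype.sum_eq_single k (fun i hi => by rw [h i, if_neg hi, mul_zero, zero_mul])]
  rw [h k, if_pos rfl]

/-- Every element of `Fin (n+2)` is `0`, `last`, or a "middle" element. -/
lemma fin_trichotomy {n : ℕ} (k : Fin (n+2)) :
    k = 0 ∨ k = Fin.last (n+1) ∨ ∃ i : Fin n, k = i.succ.castSucc := by
  rcases k with ⟨v, hv⟩
  rcases Nat.eq_zero_or_pos v with h0 | h0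
  · exact Or.inl (Fin.ext h0)
  rcases eq_or_ne v (n+1) with hL | hL
  · exact Or.inr (Or.inl (Fin.ext hL))
  · refine Or.inr (Or.inr ⟨⟨v - 1, by omega⟩, Fin.ext ?_⟩)
    simp [Fin.val_succ]
    omega

lemma mid_ne_zero {n : ℕ} (i : Fin n) : (i.succ.castSucc : Fin (n+2)) ≠ 0 := by
  simp [Fin.ext_iff]

lemma mid_ne_last {n : ℕ} (i : Fin n) : (i.succ.castSucc : Fin (n+2)) ≠ Fin.last (n+1) := by
  simp [Fin.ext_iff]
  omega

lemma zero_ne_last {n : ℕ} : (0 : Fin (n+2)) ≠ Fin.last (n+1) := by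
  simp [Fin.ext_iff]

/-- The auxiliary matrix of the Dodgson-condensation proof: the identity with first and
last columns replaced by the corresponding columns of the adjugate. -/
def Cmat {n : ℕ} (A : Matrix (Fin (n+2)) (Fin (n+2)) R) : Matrix (Fin (n+2)) (Fin (n+2)) R :=
  Matrix.of fun i k =>
    if k = 0 then adjugate A i 0
    else if k = Fin.last (n+1) then adjugate A i (Fin.last (n+1))
    else (1 : Matrix (Fin (n+2)) (Fin (n+2)) R) i k

lemma det_Cmat {n : ℕ} (A : Matrix (Fin (n+2)) (Fin (n+2)) R) :
    (Cmat A).det =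
      adjugate A 0 0 * adjugate A (Fin.last (n+1)) (Fin.last (n+1)) -
        adjugate A 0 (Fin.last (n+1)) * adjugate A (Fin.last (n+1)) 0 := by
  set L : Fin (n+2) := Fin.last (n+1) with hL
  have h0L : (0 : Fin (n+2)) ≠ L := zero_ne_last
  rw [Matrix.det_apply']
  rw [← Finset.sum_subset (Finset.subset_univ ({1, Equiv.swap 0 L} : Finset (Equiv.Perm (Fin (n+2)))))]
  · rw [Finset.sum_insert (by
      simp only [Finset.mem_singleton]
      intro h
      have : (1 : Equiv.Perm (Fin (n+2))) 0 = Equiv.swap 0 L 0 := by rw [h]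
      simp [Equiv.swap_apply_left] at this
      exact h0L this), Finset.sum_singleton]
    have hP1 : (∏ i, Cmat A ((1 : Equiv.Perm (Fin (n+2))) i) i) =
        adjugate A 0 0 * adjugate A L L := by
      simp only [Equiv.Perm.one_apply]
      rw [← Finset.mul_prod_erase Finset.univ _ (Finset.mem_univ (0 : Fin (n+2))),
        ← Finset.mul_prod_erase _ _ (Finset.mem_erase.2 ⟨Ne.symm h0L, Finset.mem_univ L⟩)]
      rw [Finset.prod_eq_one, mul_one]
      · simp [Cmat, h0L.symm, ← hL]
      · intro k hk
        simp only [Finset.mem_erase] at hk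
        rcases fin_trichotomy k with h | h | ⟨i, rfl⟩
        · exact absurd h hk.2.1
        · exact absurd h hk.1
        · simp [Cmat, mid_ne_zero i, mid_ne_last i, Matrix.one_apply]
    have hP2 : (∏ i, Cmat A (Equiv.swap 0 L i) i) =
        adjugate A L 0 * adjugate A 0 L := by
      rw [← Finset.mul_prod_erase Finset.univ _ (Finset.mem_univ (0 : Fin (n+2))),
        ← Finset.mul_prod_erase _ _ (Finset.mem_erase.2 ⟨Ne.symm h0L, Finset.mem_univ L⟩)]
      rw [Finset.prod_eq_one, mul_one]
      · simp [Cmat, Equiv.swap_apply_left, Equiv.swap_apply_right, h0L.symm, ← hL]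
      · intro k hk
        simp only [Finset.mem_erase] at hk
        rcases fin_trichotomy k with h | h | ⟨i, rfl⟩
        · exact absurd h hk.2.1
        · exact absurd h hk.1
        · rw [Equiv.swap_apply_of_ne_of_ne (mid_ne_zero i) (mid_ne_last i)]
          simp [Cmat, mid_ne_zero i, mid_ne_last i, Matrix.one_apply]
    rw [hP1, hP2, Equiv.Perm.sign_one, Equiv.Perm.sign_swap h0L]
    push_cast
    ring
  · intro σ _ hσ
    simp only [Finset.mem_insert, Finset.mem_singleton, not_or] at hσ
    have : ∃ i : Fin n, σ i.succ.castSucc ≠ i.succ.castSucc := by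
      by_contra hall
      push_neg at hall
      have hσ0 : σ 0 = 0 ∨ σ 0 = L := by
        rcases fin_trichotomy (σ 0) with h | h | ⟨i, h⟩
        · exact Or.inl h
        · exact Or.inr h
        · exact absurd (σ.injective (h.trans (hall i).symm)) (mid_ne_zero i).symm
      have hσL : σ L = 0 ∨ σ L = L := by
        rcases fin_trichotomy (σ L) with h | h | ⟨i, h⟩
        · exact Or.inl h
        · exact Or.inr h
        · exact absurd (σ.injective (h.trans (hall i).symm)) (mid_ne_last i).symm
      rcases hσ0 with h0 | h0
      · have hLL : σ L = L := by
          rcases hσL with h | h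
          · exact absurd (σ.injective (h.trans h0.symm)) (Ne.symm h0L)
          · exact h
        refine hσ.1 (Equiv.ext fun k => ?_)
        rcases fin_trichotomy k with rfl | rfl | ⟨i, rfl⟩
        · simpa using h0
        · simpa using hLL
        · simpa using hall i
      · have hL0 : σ L = 0 := by
          rcases hσL with h | h
          · exact h
          · exact absurd (σ.injective (h0.trans h.symm)) h0L
        refine hσ.2 (Equiv.ext fun k => ?_)
        rcases fin_trichotomy k with rfl | rfl | ⟨i, rfl⟩
        · rw [Equiv.swap_apply_left]; exact h0
        · rw [Equiv.swap_apply_right]; exact hL0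
        · rw [Equiv.swap_apply_of_ne_of_ne (mid_ne_zero i) (mid_ne_last i)]
          exact hall i
    obtain ⟨i, hi⟩ := this
    rw [Finset.prod_eq_zero (Finset.mem_univ i.succ.castSucc), mul_zero]
    simp only [Cmat, Matrix.of_apply, if_neg (mid_ne_zero i), if_neg (mid_ne_last i)]
    exact Matrix.one_apply_ne hi

/-- The uncancelled Desnanot–Jacobi identity, valid over every commutative ring. -/
lemma key_identity {n : ℕ} (A : Matrix (Fin (n+2)) (Fin (n+2)) R) :
    A.det * (adjugate A 0 0 * adjugate A (Fin.last (n+1)) (Fin.last (n+1)) -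
        adjugate A 0 (Fin.last (n+1)) * adjugate A (Fin.last (n+1)) 0) =
      A.det ^ 2 *
        (A.submatrix (fun i : Fin n => i.succ.castSucc) (fun i : Fin n => i.succ.castSucc)).det := by
  set L : Fin (n+2) := Fin.last (n+1) with hL
  rw [← det_Cmat, ← Matrix.det_mul]
  have hadj := Matrix.mul_adjugate A
  have hc0 : ∀ i, (A * Cmat A) i 0 = if i = 0 then A.det else 0 := by
    intro i
    rw [Matrix.mul_apply]
    have : ∑ m, A i m * Cmat A m 0 = ∑ m, A i m * adjugate A m 0 := by
      apply Finset.sum_congr rfl; intro m _; simp [Cmat]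
    rw [this, ← Matrix.mul_apply, hadj]
    simp [Matrix.one_apply]
  have hcL : ∀ i, (A * Cmat A) i L = if i = L then A.det else 0 := by
    intro i
    rw [Matrix.mul_apply]
    have : ∑ m, A i m * Cmat A m L = ∑ m, A i m * adjugate A m L := by
      apply Finset.sum_congr rfl; intro m _
      simp [Cmat, (zero_ne_last (n := n)).symm, hL]
    rw [this, ← Matrix.mul_apply, hadj]
    simp [Matrix.one_apply]
  have hmid : ∀ i (k : Fin n), (A * Cmat A) i k.succ.castSucc = A i k.succ.castSucc := by
    intro i k
    rw [Matrix.mul_apply]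
    have : ∑ m, A i m * Cmat A m k.succ.castSucc
        = ∑ m, A i m * (1 : Matrix (Fin (n+2)) (Fin (n+2)) R) m k.succ.castSucc := by
      apply Finset.sum_congr rfl; intro m _
      simp only [Cmat, Matrix.of_apply]
      rw [if_neg (mid_ne_zero k), if_neg (mid_ne_last k)]
    rw [this, ← Matrix.mul_apply, Matrix.mul_one]
  rw [det_single_col (A * Cmat A) 0 0 A.det hc0]
  rw [Fin.succAbove_zero]
  set N := (A * Cmat A).submatrix Fin.succ Fin.succ with hN
  have hNL : ∀ i, N i (Fin.last n) = if i = Fin.last n then A.det else 0 := by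
    intro i
    rw [hN, Matrix.submatrix_apply, Fin.succ_last, hcL]
    congr 1
    simp [Fin.ext_iff, L, Fin.last]
  rw [det_single_col N (Fin.last n) (Fin.last n) A.det hNL, Fin.succAbove_last]
  have hfinal : N.submatrix Fin.castSucc Fin.castSucc =
      A.submatrix (fun i : Fin n => i.succ.castSucc) (fun i : Fin n => i.succ.castSucc) := by
    ext a b
    rw [Matrix.submatrix_apply, hN, Matrix.submatrix_apply, Fin.succ_castSucc, Fin.succ_castSucc,
      hmid, Matrix.submatrix_apply]
  rw [hfinal]
  have he : Even ((Fin.last n : Fin (n+1)) + (Fin.last n : Fin (n+1)) : ℕ) := ⟨Fin.last n, rfl⟩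
  rw [he.neg_one_pow]
  simp
  ring

end Aux

/-- Desnanot–Jacobi over ℝ (cancelled form), obtained by a generic-matrix argument. -/
lemma jacobi_real {n : ℕ} (A : Matrix (Fin (n+2)) (Fin (n+2)) ℝ) :
    adjugate A 0 0 * adjugate A (Fin.last (n+1)) (Fin.last (n+1)) -
        adjugate A 0 (Fin.last (n+1)) * adjugate A (Fin.last (n+1)) 0 =
      A.det *
        (A.submatrix (fun i : Fin n => i.succ.castSucc) (fun i : Fin n => i.succ.castSucc)).det := by
  set ι := Fin (n+2) × Fin (n+2)
  let X : Matrix (Fin (n+2)) (Fin (n+2)) (MvPolynomial ι ℤ) :=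
    Matrix.of fun i j => MvPolynomial.X (i, j)
  have hX : X.det ≠ 0 := by
    intro h
    have h2 := congrArg (MvPolynomial.eval (fun p : ι => if p.1 = p.2 then (1 : ℤ) else 0)) h
    rw [RingHom.map_det] at h2
    have hid : (MvPolynomial.eval (fun p : ι => if p.1 = p.2 then (1 : ℤ) else 0)).mapMatrix X
        = (1 : Matrix (Fin (n+2)) (Fin (n+2)) ℤ) := by
      ext i j
      simp [X, Matrix.one_apply]
    rw [hid] at h2
    simp at h2
  have hkey := key_identity X
  have hcancel : adjugate X 0 0 * adjugate X (Fin.last (n+1)) (Fin.last (n+1)) -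
      adjugate X 0 (Fin.last (n+1)) * adjugate X (Fin.last (n+1)) 0 =
      X.det *
        (X.submatrix (fun i : Fin n => i.succ.castSucc) (fun i : Fin n => i.succ.castSucc)).det := by
    apply mul_left_cancel₀ hX
    rw [hkey]; ring
  let φ : MvPolynomial ι ℤ →+* ℝ :=
    (MvPolynomial.aeval (R := ℤ) (fun p : ι => A p.1 p.2)).toRingHom
  have hφX : φ.mapMatrix X = A := by
    ext i j
    simp [φ, X]
  have h3 := congrArg φ hcancel
  rw [map_sub, _root_.map_mul, _root_.map_mul, _root_.map_mul, RingHom.map_det] at h3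
  have hadjX : ∀ i j, φ (adjugate X i j) = adjugate A i j := by
    intro i j
    have := congrFun (congrFun (RingHom.map_adjugate φ X) i) j
    rw [hφX] at this
    exact this
  have hsub : φ ((X.submatrix (fun i : Fin n => i.succ.castSucc)
      (fun i : Fin n => i.succ.castSucc)).det) =
      (A.submatrix (fun i : Fin n => i.succ.castSucc) (fun i : Fin n => i.succ.castSucc)).det := by
    rw [RingHom.map_det]
    congr 1
    ext a b
    rw [← hφX]
    rfl
  rw [hadjX, hadjX, hadjX, hadjX, hφX, hsub] at h3
  exact h3

/-- The `j × j` Hankel matrix `H_g(t,j)` with `(a,b)` entry `g(t+a+b)` (0-based). -/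
def hankelMat (g : ℕ → ℝ) (t j : ℕ) : Matrix (Fin j) (Fin j) ℝ :=
  Matrix.of fun a b => g (t + a + b)

/-- Hankel–Sylvester identity for the compound impulse responses
`g_[j](t) := det H_g(t,j)` (with `g_[0] ≡ 1`, the empty determinant):
`g_[j-2](t+2) · g_[j](t) = g_[j-1](t) · g_[j-1](t+2) - g_[j-1](t+1)²`.
Here the size is written `j + 2` so that `j ≥ 2` automatically. -/
theorem hankel_sylvester_identity (g : ℕ → ℝ) (j t : ℕ) (ht : 1 ≤ t) :
    (hankelMat g (t + 2) j).det * (hankelMat g t (j + 2)).det =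
      (hankelMat g t (j + 1)).det * (hankelMat g (t + 2) (j + 1)).det -
        (hankelMat g (t + 1) (j + 1)).det ^ 2 := by
  set A := hankelMat g t (j+2) with hA
  set L : Fin (j+2) := Fin.last (j+1) with hLdef
  have h := jacobi_real (n := j) A
  have e1 : A.submatrix Fin.succ Fin.succ = hankelMat g (t+2) (j+1) := by
    ext a b
    simp only [hA, hankelMat, Matrix.submatrix_apply, Matrix.of_apply, Fin.val_succ]
    congr 1; omega
  have e2 : A.submatrix Fin.castSucc Fin.castSucc = hankelMat g t (j+1) := by
    ext a b
    simp only [hA, hankelMat, Matrix.submatrix_apply, Matrix.of_apply, Fin.coe_castSucc]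
  have e3 : A.submatrix Fin.castSucc Fin.succ = hankelMat g (t+1) (j+1) := by
    ext a b
    simp only [hA, hankelMat, Matrix.submatrix_apply, Matrix.of_apply, Fin.coe_castSucc,
      Fin.val_succ]
    congr 1; omega
  have e4 : A.submatrix Fin.succ Fin.castSucc = hankelMat g (t+1) (j+1) := by
    ext a b
    simp only [hA, hankelMat, Matrix.submatrix_apply, Matrix.of_apply, Fin.coe_castSucc,
      Fin.val_succ]
    congr 1; omega
  have e5 : A.submatrix (fun i : Fin j => i.succ.castSucc) (fun i : Fin j => i.succ.castSucc)
      = hankelMat g (t+2) j := by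
    ext a b
    simp only [hA, hankelMat, Matrix.submatrix_apply, Matrix.of_apply, Fin.coe_castSucc,
      Fin.val_succ]
    congr 1; omega
  have a00 : adjugate A 0 0 = (hankelMat g (t+2) (j+1)).det := by
    rw [Matrix.adjugate_fin_succ_eq_det_submatrix, Fin.succAbove_zero, e1]
    norm_num
  have aLL : adjugate A L L = (hankelMat g t (j+1)).det := by
    rw [Matrix.adjugate_fin_succ_eq_det_submatrix, Fin.succAbove_last, e2]
    have he : Even ((L : ℕ) + (L : ℕ)) := ⟨(L : ℕ), rfl⟩
    rw [he.neg_one_pow, one_mul]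
  have haa : adjugate A 0 L * adjugate A L 0 = (hankelMat g (t+1) (j+1)).det ^ 2 := by
    rw [Matrix.adjugate_fin_succ_eq_det_submatrix, Matrix.adjugate_fin_succ_eq_det_submatrix,
      Fin.succAbove_zero, Fin.succAbove_last, e3, e4]
    rw [mul_mul_mul_comm, ← pow_add]
    have he : Even (((L : Fin (j+2)) : ℕ) + ((0 : Fin (j+2)) : ℕ) +
        (((0 : Fin (j+2)) : ℕ) + ((L : Fin (j+2)) : ℕ))) := ⟨(L : ℕ) + ((0 : Fin (j+2)) : ℕ), by
      omega⟩
    rw [he.neg_one_pow, one_mul, sq]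
  rw [a00, aLL, haa, e5] at h
  linear_combination -h
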